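/- arXiv:1912.06301 — 2 statements merged into one kernel-verified Lean document; each statement's English description precedes it below -/
import Mathlib

section
/- Finite Dougall identity: let j be a nonnegative integer, s > 0 a real number, and x, y real with x, y, x - y - j > 0. Define E1(q) := (1/s!) C(j,q) (y+2q+s) (q+s-1)! * (y+j)^{\underline{j-q}} / (y+q+s+j)^{\underline{j+1}} * (x-y)^{\underline{q}} * (x+j+s)^{\underline{s}} / (x+q+s)^{\underline{q+s}} (interpreted via Gamma functions when s is not an integer). Then Σ_{q=0}^{j} E1(q) = E1(0) * ((x+j)^{\underline{j}} (y+s+j)^{\underline{j}}) / ((y+j)^{\underline{j}} (x+s+j)^{\underline{j}}). -/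
/-- Falling factorial `x(x-1)⋯(x-n+1)`. -/
noncomputable def ff (x : ℝ) (n : ℕ) : ℝ := ∏ i ∈ Finset.range n, (x - i)

/-- The summand `E1(q)` of the finite Dougall identity, with real parameter `s`;
fractional falling factorials and factorials are interpreted via the Gamma function:
`s! = Γ(s+1)`, `(q+s-1)! = Γ(q+s)`,
`(x+j+s)^{underline s} = Γ(x+j+s+1)/Γ(x+j+1)`,
`(x+q+s)^{underline (q+s)} = Γ(x+q+s+1)/Γ(x+1)`. -/
noncomputable def E1 (j : ℕ) (x y s : ℝ) (q : ℕ) : ℝ :=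
  (1 / Real.Gamma (s + 1)) * (j.choose q : ℝ) * (y + 2 * q + s) * Real.Gamma (q + s) *
    (ff (y + j) (j - q) / ff (y + q + s + j) (j + 1)) * ff (x - y) q *
    ((Real.Gamma (x + j + s + 1) / Real.Gamma (x + j + 1)) *
      (Real.Gamma (x + 1) / Real.Gamma (x + q + s + 1)))

lemma ff_zero (x : ℝ) : ff x 0 = 1 := by simp [ff]

lemma ff_succ (x : ℝ) (n : ℕ) : ff x (n + 1) = ff x n * (x - n) :=
  Finset.prod_range_succ _ _

lemma ff_succ_left (x : ℝ) (n : ℕ) : ff (x + 1) (n + 1) = (x + 1) * ff x n := by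
  rw [ff, Finset.prod_range_succ']
  simp only [Nat.cast_zero, sub_zero, ff]
  rw [mul_comm]
  congr 1
  apply Finset.prod_congr rfl
  intro i _
  push_cast
  ring

lemma ff_pos {x : ℝ} {n : ℕ} (h : ∀ i : ℕ, i < n → 0 < x - i) : 0 < ff x n :=
  Finset.prod_pos (by simpa using h)

lemma gamma_shift {t : ℝ} (ht : 0 < t) (k : ℕ) :
    Real.Gamma (t + k + 1) = ff (t + k) k * Real.Gamma (t + 1) := by
  induction k with
  | zero => simp [ff_zero]
  | succ k ih =>
    have h1 : t + (k + 1 : ℕ) + 1 = (t + k + 1) + 1 := by push_cast; ring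
    have h2 : t + k + 1 ≠ 0 := by positivity
    rw [h1, Real.Gamma_add_one h2, ih,
      show (t + (k + 1 : ℕ) : ℝ) = (t + k) + 1 by push_cast; ring, ff_succ_left]
    ring

lemma gamma_rising {s : ℝ} (hs : 0 < s) (q : ℕ) :
    s * Real.Gamma (q + s) = ff (q + s - 1) q * Real.Gamma (s + 1) := by
  induction q with
  | zero =>
    simp only [Nat.cast_zero, zero_add, ff_zero, one_mul]
    rw [Real.Gamma_add_one hs.ne']
  | succ q ih =>
    have h1 : ((q + 1 : ℕ) : ℝ) + s = (q + s) + 1 := by push_cast; ring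
    have h2 : (q : ℝ) + s ≠ 0 := by positivity
    rw [h1, Real.Gamma_add_one h2,
      show (q : ℝ) + s + 1 - 1 = (q + s - 1) + 1 by ring,
      ff_succ_left]
    have : (q + s - 1 + 1) = (q + s) := by ring
    rw [this]
    nlinarith [ih]

/-- The cleaned summand (no Gamma functions). -/
noncomputable def Tn (x y s : ℝ) (j q : ℕ) : ℝ :=
  (j.choose q : ℝ) * (y + 2 * q + s) * ff (q + s - 1) q * ff (y + j) (j - q) *
    ff (x + j + s) (j - q) * ff (x - y) q / ff (y + q + s + j) (j + 1)

noncomputable def Fn (x y s : ℝ) (j q : ℕ) : ℝ := Tn x y s j q / ff (x + j) j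

/-- WZ certificate companion. -/
noncomputable def Gn (x y s : ℝ) (j q : ℕ) : ℝ :=
  -((q : ℝ) * ((j + 1).choose q : ℝ) * ff (q + s - 1) q * ff (y + j) (j + 1 - q) *
      ff (x + j + s) (j + 1 - q) * ff (x - y) q) /
    (((j : ℝ) + 1) * (x + j + 1) * ff (y + q + s + j) (j + 1) * ff (x + j) j)

section

variable {x y s : ℝ} (hs : 0 < s) (hx : 0 < x) (hy : 0 < y)

include hs hy in
lemma ffW_pos (j q : ℕ) : 0 < ff (y + q + s + j) j := by
  apply ff_pos
  intro i hi
  have h1 : (i : ℝ) < j := by exact_mod_cast hi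
  have h2 : (0 : ℝ) ≤ q := Nat.cast_nonneg q
  linarith

include hs hy in
lemma ffW1_pos (j q : ℕ) : 0 < ff (y + q + s + j) (j + 1) := by
  apply ff_pos
  intro i hi
  have h1 : (i : ℝ) ≤ j := by exact_mod_cast Nat.lt_succ_iff.mp hi
  have h2 : (0 : ℝ) ≤ q := Nat.cast_nonneg q
  linarith

include hx in
lemma ffQ_pos (j : ℕ) : 0 < ff (x + j) j := by
  apply ff_pos
  intro i hi
  have h1 : (i : ℝ) < j := by exact_mod_cast hi
  linarith

include hs hx hy in
set_option maxHeartbeats 2000000 in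
lemma wz (j q : ℕ) (hq : q ≤ j + 1) :
    Fn x y s (j + 1) q - Fn x y s j q = Gn x y s j (q + 1) - Gn x y s j q := by
  have hq0 : (0 : ℝ) ≤ q := Nat.cast_nonneg q
  have hj0 : (0 : ℝ) ≤ j := Nat.cast_nonneg j
  have hW : 0 < ff (y + q + s + j) j := ffW_pos hs hy j q
  have hQ : 0 < ff (x + j) j := ffQ_pos hx j
  rcases Nat.lt_or_ge q (j + 1) with hqj | hqj
  · -- main case q ≤ j
    have hqj' : q ≤ j := by omega
    set A := ff (q + s - 1) q with hA
    set B := ff (y + j) (j - q) with hB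
    set C2 := ff (x + j + s) (j - q) with hC2
    set Dv := ff (x - y) q with hDv
    set W := ff (y + q + s + j) j with hW0
    set Q0 := ff (x + j) j with hQ0
    -- falling factorial rewrites
    have e1 : ff (y + ((j : ℝ) + 1)) (j + 1 - q) = (y + j + 1) * B := by
      rw [show j + 1 - q = (j - q) + 1 by omega,
        show y + ((j : ℝ) + 1) = (y + (j : ℝ)) + 1 by ring, ff_succ_left]
    have e2 : ff (x + ((j : ℝ) + 1) + s) (j + 1 - q) = (x + j + s + 1) * C2 := by
      rw [show j + 1 - q = (j - q) + 1 by omega,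
        show x + ((j : ℝ) + 1) + s = (x + j + s) + 1 by ring, ff_succ_left]
    have e3 : ff (x + ((j : ℝ) + 1)) (j + 1) = (x + j + 1) * Q0 := by
      rw [show x + ((j : ℝ) + 1) = (x + j) + 1 by ring, ff_succ_left]
    have e4 : ff (y + q + s + j) (j + 1) = W * (y + q + s) := by
      rw [hW0, ff_succ]
      ring_nf
    have e5 : ff (y + q + s + ((j : ℝ) + 1)) (j + 1 + 1) =
        (y + q + s + j + 1) * (W * (y + q + s)) := by
      rw [show y + (q : ℝ) + s + ((j : ℝ) + 1) = (y + q + s + j) + 1 by ring,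
        ff_succ_left, e4]
    have e6 : ff (y + ((q : ℝ) + 1) + s + j) (j + 1) = (y + q + s + j + 1) * W := by
      rw [show y + ((q : ℝ) + 1) + s + j = (y + q + s + j) + 1 by ring, ff_succ_left]
    have e7 : ff (((q : ℝ) + 1) + s - 1) (q + 1) = (q + s) * A := by
      rw [show ((q : ℝ) + 1) + s - 1 = ((q : ℝ) + s - 1) + 1 by ring, ff_succ_left, ← hA]
      ring
    have e8 : ff (x - y) (q + 1) = Dv * (x - y - q) := ff_succ _ _
    have e9 : ff (y + (j : ℝ)) (j + 1 - q) = B * (y + q) := by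
      rw [show j + 1 - q = (j - q) + 1 by omega, ff_succ, hB]
      congr 1
      rw [Nat.cast_sub hqj']
      ring
    have e10 : ff (x + (j : ℝ) + s) (j + 1 - q) = C2 * (x + s + q) := by
      rw [show j + 1 - q = (j - q) + 1 by omega, ff_succ, hC2]
      congr 1
      rw [Nat.cast_sub hqj']
      ring
    have e11 : j + 1 - (q + 1) = j - q := by omega
    -- choose relations
    have hr : (0 : ℝ) < (j : ℝ) + 1 - q := by
      have : (q : ℝ) < j + 1 := by exact_mod_cast hqj
      linarith
    have hc1 : ((j + 1).choose q : ℝ) = ((j : ℝ) + 1) * (j.choose q : ℝ) / ((j : ℝ) + 1 - q) := by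
      have h := Nat.choose_mul_succ_eq j q
      have h' : ((j.choose q : ℝ)) * ((j : ℝ) + 1) =
          ((j + 1).choose q : ℝ) * ((j : ℝ) + 1 - q) := by
          calc ((j.choose q : ℝ)) * ((j : ℝ) + 1)
              = ((j.choose q * (j + 1) : ℕ) : ℝ) := by push_cast; ring
            _ = (((j + 1).choose q * (j + 1 - q) : ℕ) : ℝ) := by rw [h]
            _ = ((j + 1).choose q : ℝ) * ((j : ℝ) + 1 - q) := by push_cast [Nat.cast_sub hq]; ring
      field_simp
      linarith [h']
    have hc2 : ((j + 1).choose (q + 1) : ℝ) =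
        ((j : ℝ) + 1 - q) * ((j + 1).choose q : ℝ) / ((q : ℝ) + 1) := by
      have h := Nat.choose_succ_right_eq (j + 1) q
      have h' : ((j + 1).choose (q + 1) : ℝ) * ((q : ℝ) + 1) =
          ((j + 1).choose q : ℝ) * ((j : ℝ) + 1 - q) := by
        calc ((j + 1).choose (q + 1) : ℝ) * ((q : ℝ) + 1)
            = (((j + 1).choose (q + 1) * (q + 1) : ℕ) : ℝ) := by push_cast; ring
          _ = (((j + 1).choose q * (j + 1 - q) : ℕ) : ℝ) := by rw [h]
          _ = ((j + 1).choose q : ℝ) * ((j : ℝ) + 1 - q) := by push_cast [Nat.cast_sub hq]; ring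
      field_simp
      linarith [h']
    simp only [Fn, Tn, Gn]
    push_cast
    rw [e1, e2, e3, e5, e4, e6, e7, e8, e9, e10, hc2, hc1]
    have hyqs : (0 : ℝ) < y + q + s := by linarith
    have hyqsj : (0 : ℝ) < y + q + s + j + 1 := by linarith
    have hxj1 : (0 : ℝ) < x + j + 1 := by linarith
    have hq1 : (0 : ℝ) < (q : ℝ) + 1 := by linarith
    have hj1 : (0 : ℝ) < (j : ℝ) + 1 := by linarith
    simp only [hA, hB, hC2, hDv, hW0, hQ0] at hW hQ ⊢
    field_simp
    ring
  · -- boundary case q = j + 1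
    have hq' : q = j + 1 := by omega
    subst hq'
    have hch : j.choose (j + 1) = 0 := Nat.choose_eq_zero_of_lt (by omega)
    have hch2 : (j + 1).choose (j + 1 + 1) = 0 := Nat.choose_eq_zero_of_lt (by omega)
    have hch3 : (j + 1).choose (j + 1) = 1 := Nat.choose_self _
    have hz1 : Fn x y s j (j + 1) = 0 := by
      simp [Fn, Tn, hch]
    have hz2 : Gn x y s j (j + 1 + 1) = 0 := by
      simp [Gn, hch2]
    rw [hz1, hz2]
    simp only [Fn, Tn, Gn, hch3, Nat.sub_self, Nat.cast_one]
    have e1 : ff (y + ((j : ℝ) + 1) + s + ((j : ℝ) + 1)) (j + 1 + 1) =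
        (y + (j + 1 : ℝ) + s + j + 1) * ff (y + ((j : ℝ) + 1) + s + j) (j + 1) := by
      rw [show y + ((j : ℝ) + 1) + s + ((j : ℝ) + 1) = (y + ((j : ℝ) + 1) + s + j) + 1 by ring,
        ff_succ_left]
    have e2 : ff (x + ((j : ℝ) + 1)) (j + 1) = (x + j + 1) * ff (x + (j : ℝ)) j := by
      rw [show x + ((j : ℝ) + 1) = (x + (j : ℝ)) + 1 by ring, ff_succ_left]
    have hW2 : 0 < ff (y + ((j : ℝ) + 1) + s + j) (j + 1) := by
      have := ffW1_pos hs hy j (j + 1)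
      rw [show y + ((j + 1 : ℕ) : ℝ) + s + (j : ℝ) = y + ((j : ℝ) + 1) + s + j by push_cast; ring]
        at this
      exact this
    have hj0 : (0 : ℝ) ≤ j := Nat.cast_nonneg j
    push_cast
    simp only [ff_zero, mul_one, one_mul]
    rw [e1, e2]
    have h1 : (0 : ℝ) < y + ((j : ℝ) + 1) + s + j + 1 := by linarith
    have h2 : (0 : ℝ) < x + (j : ℝ) + 1 := by linarith
    have h3 : (0 : ℝ) < (j : ℝ) + 1 := by linarith
    field_simp
    ring
include hs hx hy in
lemma key (j : ℕ) : ∑ q ∈ Finset.range (j + 1), Fn x y s j q = 1 := by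
  induction j with
  | zero =>
    rw [Finset.sum_range_one]
    have h : y + s ≠ 0 := by linarith
    simp [Fn, Tn, ff, h]
  | succ j ih =>
    have tel : ∑ q ∈ Finset.range (j + 2), (Gn x y s j (q + 1) - Gn x y s j q)
        = Gn x y s j (j + 2) - Gn x y s j 0 := Finset.sum_range_sub _ _
    have hwz : ∀ q ∈ Finset.range (j + 2),
        Fn x y s (j + 1) q = Fn x y s j q + (Gn x y s j (q + 1) - Gn x y s j q) := by
      intro q hq
      have h := wz hs hx hy j q (by simpa [Nat.lt_succ_iff] using Finset.mem_range.mp hq)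
      linarith
    have hFnj1 : Fn x y s j (j + 1) = 0 := by
      simp [Fn, Tn, Nat.choose_succ_self]
    have hGn0 : Gn x y s j 0 = 0 := by simp [Gn]
    have hGn2 : Gn x y s j (j + 2) = 0 := by
      simp [Gn, Nat.choose_succ_self]
    calc ∑ q ∈ Finset.range (j + 1 + 1), Fn x y s (j + 1) q
        = ∑ q ∈ Finset.range (j + 2), (Fn x y s j q + (Gn x y s j (q + 1) - Gn x y s j q)) :=
          Finset.sum_congr rfl hwz
      _ = ∑ q ∈ Finset.range (j + 2), Fn x y s j q + (Gn x y s j (j + 2) - Gn x y s j 0) := by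
          rw [Finset.sum_add_distrib, tel]
      _ = (∑ q ∈ Finset.range (j + 1), Fn x y s j q + Fn x y s j (j + 1)) + 0 := by
          rw [Finset.sum_range_succ, hGn2, hGn0]; ring
      _ = 1 := by rw [ih, hFnj1]; ring

include hs hx hy in
lemma E1_eq {j q : ℕ} (hq : q ≤ j) :
    E1 j x y s q = Tn x y s j q / (s * ff (x + j) j) := by
  have hq0 : (0:ℝ) ≤ q := Nat.cast_nonneg q
  have hG1 : s * Real.Gamma (q + s) = ff (q + s - 1) q * Real.Gamma (s + 1) :=
    gamma_rising hs q
  have ht : (0:ℝ) < x + q + s := by linarith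
  have hG2 : Real.Gamma (x + (j:ℝ) + s + 1)
      = ff (x + j + s) (j - q) * Real.Gamma (x + q + s + 1) := by
    have h := gamma_shift ht (j - q)
    rw [show x + (q:ℝ) + s + ((j - q : ℕ):ℝ) = x + (j:ℝ) + s by
      rw [Nat.cast_sub hq]; ring] at h
    exact h
  have hG3 : Real.Gamma (x + (j:ℝ) + 1) = ff (x + j) j * Real.Gamma (x + 1) :=
    gamma_shift hx j
  have hg1 : Real.Gamma (s + 1) ≠ 0 := (Real.Gamma_pos_of_pos (by linarith)).ne'
  have hg2 : Real.Gamma (x + 1) ≠ 0 := (Real.Gamma_pos_of_pos (by linarith)).ne'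
  have hg3 : Real.Gamma (x + q + s + 1) ≠ 0 := (Real.Gamma_pos_of_pos (by linarith)).ne'
  have hQ : ff (x + (j:ℝ)) j ≠ 0 := (ffQ_pos hx j).ne'
  have hW1 : ff (y + (q:ℝ) + s + (j:ℝ)) (j + 1) ≠ 0 := (ffW1_pos hs hy j q).ne'
  have hG1' : Real.Gamma (q + s) = ff (q + s - 1) q * Real.Gamma (s + 1) / s := by
    rw [← hG1]
    field_simp
  rw [E1, Tn, hG2, hG3, hG1']
  field_simp

end

theorem stmt9 (j : ℕ) (s x y : ℝ) (hs : 0 < s) (hx : 0 < x) (hy : 0 < y)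
    (hxy : 0 < x - y - j) :
    ∑ q ∈ Finset.range (j + 1), E1 j x y s q =
      E1 j x y s 0 * (ff (x + j) j * ff (y + s + j) j) /
        (ff (y + j) j * ff (x + s + j) j) := by
  have hq0 : ∀ i : ℕ, i < j → (i:ℝ) < j := fun i hi => by exact_mod_cast hi
  have hQ : 0 < ff (x + (j:ℝ)) j := ffQ_pos hx j
  have hYJ : 0 < ff (y + (j:ℝ)) j := ff_pos fun i hi => by have := hq0 i hi; linarith
  have hXSJ : 0 < ff (x + s + (j:ℝ)) j := ff_pos fun i hi => by have := hq0 i hi; linarith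
  have hYSJ : 0 < ff (y + s + (j:ℝ)) j := ff_pos fun i hi => by have := hq0 i hi; linarith
  have hsum : ∑ q ∈ Finset.range (j + 1), E1 j x y s q = 1 / s := by
    have h1 : ∀ q ∈ Finset.range (j + 1), E1 j x y s q = Fn x y s j q * (1 / s) := by
      intro q hq
      rw [E1_eq hs hx hy (Nat.lt_succ_iff.mp (Finset.mem_range.mp hq)), Fn]
      ring
    rw [Finset.sum_congr rfl h1, ← Finset.sum_mul, key hs hx hy j, one_mul]
  rw [hsum, E1_eq hs hx hy (Nat.zero_le j)]
  have hTn0 : Tn x y s j 0 =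
      (y + s) * ff (y + (j:ℝ)) j * ff (x + (j:ℝ) + s) j / (ff (y + s + (j:ℝ)) j * (y + s)) := by
    simp only [Tn, Nat.choose_zero_right, Nat.cast_one, Nat.cast_zero, ff_zero,
      Nat.sub_zero, mul_zero, mul_one, one_mul, add_zero, zero_add]
    rw [ff_succ, show y + s + (j:ℝ) - (j:ℝ) = y + s by ring]
  rw [hTn0, show x + (j:ℝ) + s = x + s + (j:ℝ) by ring]
  have hys : y + s ≠ 0 := by linarith
  field_simp
end

section
/- For a partition λ and a partition μ with |μ| ≤ |λ| and μ ≠ λ, the Knop–Sahi polynomial satisfies the vanishing property P^κ_λ(μ1 - κ - 1, μ2) = 0 as a rational function of κ. -/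
noncomputable def ffF (a : RatFunc ℚ) (n : ℕ) : RatFunc ℚ :=
  ∏ i ∈ Finset.range n, (a - (i : RatFunc ℚ))

noncomputable def KSfun (l1 l2 : ℕ) (κ x y : RatFunc ℚ) : RatFunc ℚ :=
  ∑ i ∈ Finset.range (l1 - l2 + 1), ∑ j ∈ Finset.range (l1 - l2 + 1 - i),
    ((l1 - l2).factorial : RatFunc ℚ) * ffF (κ + 1) (l1 - l2 - i) *
        ffF (κ + 1) (l1 - l2 - j) /
      ((i.factorial : RatFunc ℚ) * (j.factorial : RatFunc ℚ) *
        ((l1 - l2 - i - j).factorial : RatFunc ℚ) * ffF (κ + 1) (l1 - l2)) *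
      ffF x (l2 + i) * ffF y (l2 + j)

lemma ffF_succ (a : RatFunc ℚ) (n : ℕ) : ffF a (n + 1) = ffF a n * (a - n) := by
  simp [ffF, Finset.prod_range_succ]

lemma ffF_add (a : RatFunc ℚ) (p q : ℕ) : ffF a (p + q) = ffF a p * ffF (a - p) q := by
  unfold ffF
  rw [Finset.prod_range_add]
  congr 1
  refine Finset.prod_congr rfl fun i _ => ?_
  push_cast
  ring

lemma ffF_vandermonde (w : RatFunc ℚ) (N : ℕ) (v : RatFunc ℚ) :
    ffF (v + w) N
      = ∑ i ∈ Finset.range (N + 1), (N.choose i : RatFunc ℚ) * ffF v (N - i) * ffF w i := by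
  induction N generalizing v with
  | zero => simp [ffF]
  | succ N ih =>
    have h1 : ffF (v + w) (N + 1) = ffF (v + w) N * (v + w - N) := ffF_succ _ _
    rw [h1, ih, Finset.sum_mul]
    have key : ∀ i ∈ Finset.range (N + 1),
        (N.choose i : RatFunc ℚ) * ffF v (N - i) * ffF w i * (v + w - N)
          = (N.choose i : RatFunc ℚ) * (ffF v (N + 1 - i) * ffF w i)
            + (N.choose i : RatFunc ℚ) * (ffF v (N - i) * ffF w (i + 1)) := by
      intro i hi
      rw [Finset.mem_range] at hi
      have hNi : N + 1 - i = (N - i) + 1 := by omega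
      rw [hNi, ffF_succ, ffF_succ]
      have hN : (N : RatFunc ℚ) = ((N - i : ℕ) : RatFunc ℚ) + (i : RatFunc ℚ) := by
        rw [← Nat.cast_add]
        exact congrArg _ (by omega)
      rw [hN]; ring
    rw [Finset.sum_congr rfl key, Finset.sum_add_distrib]
    -- name pieces
    have hA : ∑ i ∈ Finset.range (N + 1),
        (N.choose i : RatFunc ℚ) * (ffF v (N + 1 - i) * ffF w i)
        = (∑ i ∈ Finset.range N,
            (N.choose (i + 1) : RatFunc ℚ) * (ffF v (N + 1 - (i + 1)) * ffF w (i + 1)))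
          + (N.choose 0 : RatFunc ℚ) * (ffF v (N + 1) * ffF w 0) := by
      rw [Finset.sum_range_succ']
      norm_num
    have hR : ∑ i ∈ Finset.range (N + 1 + 1),
        ((N + 1).choose i : RatFunc ℚ) * ffF v (N + 1 - i) * ffF w i
        = (∑ i ∈ Finset.range (N + 1),
            ((N + 1).choose (i + 1) : RatFunc ℚ) * ffF v (N + 1 - (i + 1)) * ffF w (i + 1))
          + ((N + 1).choose 0 : RatFunc ℚ) * ffF v (N + 1) * ffF w 0 := by
      rw [Finset.sum_range_succ']
      norm_num
    rw [hA, hR]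
    have hPascal : ∀ i ∈ Finset.range (N + 1),
        ((N + 1).choose (i + 1) : RatFunc ℚ) * ffF v (N + 1 - (i + 1)) * ffF w (i + 1)
          = (N.choose (i + 1) : RatFunc ℚ) * (ffF v (N + 1 - (i + 1)) * ffF w (i + 1))
            + (N.choose i : RatFunc ℚ) * (ffF v (N - i) * ffF w (i + 1)) := by
      intro i hi
      have : (N + 1).choose (i + 1) = N.choose (i + 1) + N.choose i := by
        rw [Nat.choose_succ_succ']
        omega
      rw [this]
      have h2 : N + 1 - (i + 1) = N - i := by omega
      rw [h2]
      push_cast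
      ring
    rw [Finset.sum_congr rfl hPascal, Finset.sum_add_distrib]
    have hext : ∑ i ∈ Finset.range (N + 1),
        (N.choose (i + 1) : RatFunc ℚ) * (ffF v (N + 1 - (i + 1)) * ffF w (i + 1))
        = ∑ i ∈ Finset.range N,
            (N.choose (i + 1) : RatFunc ℚ) * (ffF v (N + 1 - (i + 1)) * ffF w (i + 1)) := by
      rw [Finset.sum_range_succ]
      simp
    rw [hext]
    simp only [Nat.choose_zero_right, Nat.cast_one]
    ring

lemma keyzero (l1 l2 m1 m2 j : ℕ) (hl : l2 ≤ l1) (hm : m2 ≤ m1)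
    (hsize : m1 + m2 ≤ l1 + l2) (hne : ¬(m1 = l1 ∧ m2 = l2)) :
    ffF ((m1 : RatFunc ℚ) - (l2 : RatFunc ℚ) - (j : RatFunc ℚ)) (l1 - l2 - j)
      * ffF (m2 : RatFunc ℚ) (l2 + j) = 0 := by
  by_cases h : l2 + j ≤ m2
  · apply mul_eq_zero_of_left
    have hm1 : m1 < l1 := by omega
    have ht : m1 - l2 - j < l1 - l2 - j := by omega
    apply Finset.prod_eq_zero (Finset.mem_range.mpr ht)
    have hcast : ((m1 - l2 - j : ℕ) : RatFunc ℚ)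
        = (m1 : RatFunc ℚ) - (l2 : RatFunc ℚ) - (j : RatFunc ℚ) := by
      rw [Nat.cast_sub (by omega : j ≤ m1 - l2), Nat.cast_sub (by omega : l2 ≤ m1)]
    rw [hcast, sub_self]
  · apply mul_eq_zero_of_right
    apply Finset.prod_eq_zero (Finset.mem_range.mpr (by omega : m2 < l2 + j))
    rw [sub_self]

lemma ffF_u_ne_zero (k : ℕ) : ffF (RatFunc.X + 1) k ≠ 0 := by
  unfold ffF
  rw [Finset.prod_ne_zero_iff]
  intro i _
  have hrep : RatFunc.X + 1 - (i : RatFunc ℚ)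
      = algebraMap (Polynomial ℚ) (RatFunc ℚ)
          (Polynomial.X + 1 - (i : Polynomial ℚ)) := by
    simp [map_sub, map_add, RatFunc.algebraMap_X]
  rw [hrep]
  intro h
  have h0 : (Polynomial.X + 1 - (i : Polynomial ℚ) : Polynomial ℚ) = 0 :=
    RatFunc.algebraMap_injective ℚ (by simpa using h)
  have := congrArg (fun p => Polynomial.coeff p 1) h0
  simp [Polynomial.coeff_one, Polynomial.coeff_natCast_ite] at this

theorem stmt15 (l1 l2 m1 m2 : ℕ) (hl : l2 ≤ l1) (hm : m2 ≤ m1)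
    (hsize : m1 + m2 ≤ l1 + l2) (hne : (m1, m2) ≠ (l1, l2)) :
    KSfun l1 l2 RatFunc.X ((m1 : RatFunc ℚ) - RatFunc.X - 1) (m2 : RatFunc ℚ) = 0 := by
  have hne' : ¬(m1 = l1 ∧ m2 = l2) := by
    intro ⟨h1, h2⟩; exact hne (by simp [h1, h2])
  unfold KSfun
  set n := l1 - l2 with hn
  set u : RatFunc ℚ := RatFunc.X + 1 with hu
  set x : RatFunc ℚ := (m1 : RatFunc ℚ) - RatFunc.X - 1 with hx
  rw [Finset.sum_comm' (t' := Finset.range (n + 1))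
      (s' := fun j => Finset.range (n + 1 - j))
      (by intro i j; simp only [Finset.mem_range]; omega)]
  apply Finset.sum_eq_zero
  intro j hj
  rw [Finset.mem_range] at hj
  have hj' : j ≤ n := by omega
  -- rewrite each term in the inner sum
  have hterm : ∀ i ∈ Finset.range (n + 1 - i), True := fun _ _ => trivial
  have hC : ∀ i ∈ Finset.range (n + 1 - j),
      (n.factorial : RatFunc ℚ) * ffF u (n - i) * ffF u (n - j) /
          ((i.factorial : RatFunc ℚ) * (j.factorial : RatFunc ℚ) *
            ((n - i - j).factorial : RatFunc ℚ) * ffF u n) *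
          ffF x (l2 + i) * ffF (m2 : RatFunc ℚ) (l2 + j)
        = ((n.choose j : RatFunc ℚ) * ffF u j * ffF u (n - j) * ffF x l2 *
            ffF (m2 : RatFunc ℚ) (l2 + j) / ffF u n)
          * (((n - j).choose i : RatFunc ℚ) * ffF (u - j) (n - j - i) * ffF (x - l2) i) := by
    intro i hi
    rw [Finset.mem_range] at hi
    have hij : i ≤ n - j := by omega
    have h3 : n - i - j = n - j - i := by omega
    rw [h3]
    have e1 : n - i = j + (n - j - i) := by omega
    rw [e1, ffF_add, ffF_add x l2 i]
    have hfac : (n.factorial : ℚ) ≠ 0 := by positivity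
    have hfacnat : n.factorial = n.choose j * (n - j).choose i *
        (i.factorial * j.factorial * (n - j - i).factorial) := by
      have h1 : n.choose j * j.factorial * (n - j).factorial = n.factorial :=
        Nat.choose_mul_factorial_mul_factorial hj'
      have h2 : (n - j).choose i * i.factorial * ((n - j) - i).factorial
          = (n - j).factorial := Nat.choose_mul_factorial_mul_factorial hij
      rw [← h1, ← h2]
      ring
    have hfacR : (n.factorial : RatFunc ℚ)
        = (n.choose j : RatFunc ℚ) * ((n - j).choose i : RatFunc ℚ) *
          ((i.factorial : RatFunc ℚ) * (j.factorial : RatFunc ℚ) *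
            ((n - j - i).factorial : RatFunc ℚ)) := by
      rw [← Nat.cast_mul, ← Nat.cast_mul, ← Nat.cast_mul, ← Nat.cast_mul, ← hfacnat]
    rw [hfacR]
    haveI : CharZero (RatFunc ℚ) :=
      charZero_of_injective_algebraMap (algebraMap ℚ (RatFunc ℚ)).injective
    have hU : ffF u n ≠ 0 := by rw [hu]; exact ffF_u_ne_zero n
    have hfi : (i.factorial : RatFunc ℚ) ≠ 0 :=
      Nat.cast_ne_zero.mpr (Nat.factorial_ne_zero _)
    have hfj : (j.factorial : RatFunc ℚ) ≠ 0 :=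
      Nat.cast_ne_zero.mpr (Nat.factorial_ne_zero _)
    have hfk : (((n - j - i).factorial : ℕ) : RatFunc ℚ) ≠ 0 :=
      Nat.cast_ne_zero.mpr (Nat.factorial_ne_zero _)
    field_simp [hfi, hfj, hfk, hU]
  rw [Finset.sum_congr rfl hC, ← Finset.mul_sum]
  have hrange : n + 1 - j = (n - j) + 1 := by omega
  rw [hrange, ← ffF_vandermonde (x - l2) (n - j) (u - j)]
  have harg : (u - (j : RatFunc ℚ)) + (x - (l2 : RatFunc ℚ))
      = (m1 : RatFunc ℚ) - (l2 : RatFunc ℚ) - (j : RatFunc ℚ) := by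
    rw [hu, hx]; ring
  rw [harg]
  have hzero := keyzero l1 l2 m1 m2 j hl hm hsize hne'
  calc ((n.choose j : RatFunc ℚ) * ffF u j * ffF u (n - j) * ffF x l2 *
          ffF (m2 : RatFunc ℚ) (l2 + j) / ffF u n)
        * ffF ((m1 : RatFunc ℚ) - (l2 : RatFunc ℚ) - (j : RatFunc ℚ)) (n - j)
      = ((n.choose j : RatFunc ℚ) * ffF u j * ffF u (n - j) * ffF x l2 / ffF u n)
        * (ffF ((m1 : RatFunc ℚ) - (l2 : RatFunc ℚ) - (j : RatFunc ℚ)) (n - j)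
            * ffF (m2 : RatFunc ℚ) (l2 + j)) := by ring
    _ = 0 := by rw [hn] at *; rw [hzero, mul_zero]
end
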